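/- For every d ≥ 1, p_d(1)² < p_d(0)·p_d(2) and p_d(2)² > p_d(1)·p_d(3). Moreover p_d(3)² > p_d(2)·p_d(4) if and only if d ≥ 4, and p_d(4)² < p_d(3)·p_d(5) if and only if d ≥ 6. -/

import Mathlib

open PowerSeries Finset

lemma coeff_osp (n m k : ℕ) (hn : 0 < n) :
    (PowerSeries.coeff (R := ℚ) k) ((1 - (X : PowerSeries ℚ) ^ n) ^ m) =
      if n ∣ k then (-1 : ℚ) ^ (k / n) * (m.choose (k / n)) else 0 := by
  rw [sub_eq_add_neg, add_comm, add_pow]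
  rw [map_sum]
  have h : ∀ i ∈ Finset.range (m + 1),
      (PowerSeries.coeff (R := ℚ) k) ((-(X : PowerSeries ℚ) ^ n) ^ i * 1 ^ (m - i) * (m.choose i : PowerSeries ℚ)) =
      if n * i = k then (-1 : ℚ) ^ i * (m.choose i) else 0 := by
    intro i _
    rw [one_pow, mul_one, neg_pow, ← pow_mul,
      show ((-1 : PowerSeries ℚ) ^ i) = PowerSeries.C (R := ℚ) ((-1:ℚ)^i) by simp,
      show ((m.choose i : PowerSeries ℚ)) = PowerSeries.C (R := ℚ) ((m.choose i : ℚ)) by simp,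
      mul_right_comm, ← map_mul, PowerSeries.coeff_C_mul, PowerSeries.coeff_X_pow]
    split_ifs with h1 h2 h3
    · ring
    · exact absurd h1.symm h2
    · exact absurd h3.symm h1
    · ring
  rw [Finset.sum_congr rfl h]
  by_cases hd : n ∣ k
  · obtain ⟨c, rfl⟩ := hd
    have heq : ∀ i, (n * i = n * c) ↔ i = c := fun i =>
      ⟨fun h => Nat.eq_of_mul_eq_mul_left hn h, fun h => by rw [h]⟩
    simp only [heq]
    rw [Finset.sum_ite_eq' (Finset.range (m+1)) c (fun i => (-1:ℚ)^i * (m.choose i))]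
    rw [Nat.mul_div_cancel_left c hn, if_pos (Dvd.intro c rfl)]
    simp only [Finset.mem_range]
    split_ifs with h2
    · rfl
    · have hc : m.choose c = 0 := Nat.choose_eq_zero_of_lt (by omega)
      simp [hc]
  · rw [if_neg hd]
    apply Finset.sum_eq_zero
    intro i _
    rw [if_neg]
    intro h; exact hd ⟨i, h.symm⟩

lemma aux0 : ∀ e : ℕ, 3 ≤ e → 2 * 2 ^ e + 5 ≤ 3 ^ e := by
  intro e he
  induction e, he using Nat.le_induction with
  | base => norm_num
  | succ e he ih =>
    have h2 : 0 < 2 ^ e := pow_pos (by norm_num) e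
    rw [pow_succ, pow_succ]
    nlinarith [ih, h2]

lemma aux1 : ∀ e : ℕ, 4 ≤ e → 4 * 2 ^ e + 16 ≤ 3 ^ e := by
  intro e he
  induction e, he using Nat.le_induction with
  | base => norm_num
  | succ e he ih =>
    have h2 : 0 < 2 ^ e := pow_pos (by norm_num) e
    rw [pow_succ, pow_succ]
    nlinarith [ih, h2]

lemma lem3 : ∀ e : ℕ, 3 ≤ e →
    3 * 8 ^ e + 4 * 4 ^ e + 2 ^ e < 2 * 9 ^ e + 2 * 6 ^ e + 2 * 3 ^ e := by
  intro e he
  induction e, he using Nat.le_induction with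
  | base => norm_num
  | succ e he ih =>
    have h9 : (9:ℕ) ^ e = 3 ^ e * 3 ^ e := by rw [show (9:ℕ) = 3 * 3 from rfl, mul_pow]
    have h6 : (6:ℕ) ^ e = 2 ^ e * 3 ^ e := by rw [show (6:ℕ) = 2 * 3 from rfl, mul_pow]
    have h4 : (4:ℕ) ^ e = 2 ^ e * 2 ^ e := by rw [show (4:ℕ) = 2 * 2 from rfl, mul_pow]
    have h8 : (8:ℕ) ^ e = 2 ^ e * (2 ^ e * 2 ^ e) := by
      rw [show (8:ℕ) = 2 * (2 * 2) from rfl, mul_pow, mul_pow]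
    have hL := aux0 e he
    have hTT : (2 * 2 ^ e + 5) * 3 ^ e ≤ 3 ^ e * 3 ^ e :=
      Nat.mul_le_mul_right _ hL
    simp only [pow_succ]
    nlinarith [ih, hTT, h9, h6, h4, h8, pow_pos (show 0 < 2 by norm_num) e,
      pow_pos (show 0 < 3 by norm_num) e]

lemma lem4 : ∀ e : ℕ, 5 ≤ e →
    2 * 12 ^ e + 2 * 2 ^ e + 9 * 4 ^ e + 12 * 8 ^ e + 9 * 16 ^ e <
      2 * 6 ^ e + 4 * 18 ^ e + 4 * 5 ^ e + 4 * 10 ^ e + 4 * 15 ^ e := by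
  intro e he
  induction e, he using Nat.le_induction with
  | base => norm_num
  | succ e he ih =>
    have h12 : (12:ℕ) ^ e = 2 ^ e * 2 ^ e * 3 ^ e := by
      rw [show (12:ℕ) = 2 * 2 * 3 from rfl, mul_pow, mul_pow]
    have h4 : (4:ℕ) ^ e = 2 ^ e * 2 ^ e := by rw [show (4:ℕ) = 2 * 2 from rfl, mul_pow]
    have h8 : (8:ℕ) ^ e = 2 ^ e * 2 ^ e * 2 ^ e := by
      rw [show (8:ℕ) = 2 * 2 * 2 from rfl, mul_pow, mul_pow]
    have h16 : (16:ℕ) ^ e = 2 ^ e * 2 ^ e * 2 ^ e * 2 ^ e := by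
      rw [show (16:ℕ) = 2 * 2 * 2 * 2 from rfl, mul_pow, mul_pow, mul_pow]
    have h6 : (6:ℕ) ^ e = 2 ^ e * 3 ^ e := by rw [show (6:ℕ) = 2 * 3 from rfl, mul_pow]
    have h18 : (18:ℕ) ^ e = 2 ^ e * 3 ^ e * 3 ^ e := by
      rw [show (18:ℕ) = 2 * 3 * 3 from rfl, mul_pow, mul_pow]
    have h10 : (10:ℕ) ^ e = 2 ^ e * 5 ^ e := by rw [show (10:ℕ) = 2 * 5 from rfl, mul_pow]
    have h15 : (15:ℕ) ^ e = 3 ^ e * 5 ^ e := by rw [show (15:ℕ) = 3 * 5 from rfl, mul_pow]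
    have hg : (5:ℕ) ^ e ≤ 2 ^ e * 3 ^ e := by
      rw [← h6]; exact Nat.pow_le_pow_left (by norm_num) e
    have hag : 2 ^ e * 5 ^ e ≤ 2 ^ e * (2 ^ e * 3 ^ e) := Nat.mul_le_mul_left _ hg
    have htg : 3 ^ e * 5 ^ e ≤ 3 ^ e * (2 ^ e * 3 ^ e) := Nat.mul_le_mul_left _ hg
    have hL := aux1 e (by omega)
    have hTT : (4 * 2 ^ e + 16) * 3 ^ e ≤ 3 ^ e * 3 ^ e := Nat.mul_le_mul_right _ hL
    have hATT : 2 ^ e * ((4 * 2 ^ e + 16) * 3 ^ e) ≤ 2 ^ e * (3 ^ e * 3 ^ e) :=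
      Nat.mul_le_mul_left _ hTT
    simp only [pow_succ]
    nlinarith [ih, hag, htg, hATT, hg, h12, h4, h8, h16, h6, h18, h10, h15,
      pow_pos (show 0 < 2 by norm_num) e,
      pow_pos (show 0 < 3 by norm_num) e,
      pow_pos (show 0 < 5 by norm_num) e]

/-- `p : ℕ → ℚ` is the coefficient sequence of `∏_{n≥1} (1-q^n)^{-n^(d-1)}`. -/
def IsPdSeries (d : ℕ) (p : ℕ → ℚ) : Prop :=
  ∀ N k : ℕ, k ≤ N →
    (PowerSeries.coeff (R := ℚ) k) ((PowerSeries.mk p) *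
      ∏ n ∈ Finset.Icc 1 N, (1 - (PowerSeries.X : PowerSeries ℚ) ^ n) ^ (n ^ (d - 1))) =
    if k = 0 then 1 else 0

set_option maxHeartbeats 2000000 in
/-- Log-concavity/convexity relations of `p_d` at `n = 1, 2, 3, 4`. -/
theorem pd_small_log_relations (d : ℕ) (hd : 1 ≤ d) (p : ℕ → ℚ) (hp : IsPdSeries d p) :
    p 1 ^ 2 < p 0 * p 2 ∧
    p 2 ^ 2 > p 1 * p 3 ∧
    (p 3 ^ 2 > p 2 * p 4 ↔ 4 ≤ d) ∧
    (p 4 ^ 2 < p 3 * p 5 ↔ 6 ≤ d) := by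
  obtain ⟨e, rfl⟩ : ∃ e, d = e + 1 := ⟨d - 1, by omega⟩
  simp only [IsPdSeries, Nat.add_sub_cancel] at hp
  have hIcc : Finset.Icc 1 5 = ({1,2,3,4,5} : Finset ℕ) := rfl
  have h0 := hp 5 0 (by norm_num)
  rw [hIcc, Finset.prod_insert (by norm_num), Finset.prod_insert (by norm_num),
    Finset.prod_insert (by norm_num), Finset.prod_insert (by norm_num),
    Finset.prod_singleton] at h0
  simp only [coeff_mul, Nat.sum_antidiagonal_eq_sum_range_succ_mk, Finset.sum_range_succ,
    Finset.sum_range_zero, coeff_mk, one_pow,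
    coeff_osp 1 _ _ one_pos, coeff_osp 2 _ _ two_pos, coeff_osp 3 _ _ (by norm_num),
    coeff_osp 4 _ _ (by norm_num), coeff_osp 5 _ _ (by norm_num)] at h0
  norm_num at h0
  have h1 := hp 5 1 (by norm_num)
  rw [hIcc, Finset.prod_insert (by norm_num), Finset.prod_insert (by norm_num),
    Finset.prod_insert (by norm_num), Finset.prod_insert (by norm_num),
    Finset.prod_singleton] at h1
  simp only [coeff_mul, Nat.sum_antidiagonal_eq_sum_range_succ_mk, Finset.sum_range_succ,
    Finset.sum_range_zero, coeff_mk, one_pow,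
    coeff_osp 1 _ _ one_pos, coeff_osp 2 _ _ two_pos, coeff_osp 3 _ _ (by norm_num),
    coeff_osp 4 _ _ (by norm_num), coeff_osp 5 _ _ (by norm_num)] at h1
  norm_num at h1
  have h2 := hp 5 2 (by norm_num)
  rw [hIcc, Finset.prod_insert (by norm_num), Finset.prod_insert (by norm_num),
    Finset.prod_insert (by norm_num), Finset.prod_insert (by norm_num),
    Finset.prod_singleton] at h2
  simp only [coeff_mul, Nat.sum_antidiagonal_eq_sum_range_succ_mk, Finset.sum_range_succ,
    Finset.sum_range_zero, coeff_mk, one_pow,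
    coeff_osp 1 _ _ one_pos, coeff_osp 2 _ _ two_pos, coeff_osp 3 _ _ (by norm_num),
    coeff_osp 4 _ _ (by norm_num), coeff_osp 5 _ _ (by norm_num)] at h2
  norm_num at h2
  have h3 := hp 5 3 (by norm_num)
  rw [hIcc, Finset.prod_insert (by norm_num), Finset.prod_insert (by norm_num),
    Finset.prod_insert (by norm_num), Finset.prod_insert (by norm_num),
    Finset.prod_singleton] at h3
  simp only [coeff_mul, Nat.sum_antidiagonal_eq_sum_range_succ_mk, Finset.sum_range_succ,
    Finset.sum_range_zero, coeff_mk, one_pow,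
    coeff_osp 1 _ _ one_pos, coeff_osp 2 _ _ two_pos, coeff_osp 3 _ _ (by norm_num),
    coeff_osp 4 _ _ (by norm_num), coeff_osp 5 _ _ (by norm_num)] at h3
  norm_num [Nat.choose] at h3
  have h4 := hp 5 4 (by norm_num)
  rw [hIcc, Finset.prod_insert (by norm_num), Finset.prod_insert (by norm_num),
    Finset.prod_insert (by norm_num), Finset.prod_insert (by norm_num),
    Finset.prod_singleton] at h4
  simp only [coeff_mul, Nat.sum_antidiagonal_eq_sum_range_succ_mk, Finset.sum_range_succ,
    Finset.sum_range_zero, coeff_mk, one_pow,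
    coeff_osp 1 _ _ one_pos, coeff_osp 2 _ _ two_pos, coeff_osp 3 _ _ (by norm_num),
    coeff_osp 4 _ _ (by norm_num), coeff_osp 5 _ _ (by norm_num)] at h4
  norm_num [Nat.choose] at h4
  have h5 := hp 5 5 (by norm_num)
  rw [hIcc, Finset.prod_insert (by norm_num), Finset.prod_insert (by norm_num),
    Finset.prod_insert (by norm_num), Finset.prod_insert (by norm_num),
    Finset.prod_singleton] at h5
  simp only [coeff_mul, Nat.sum_antidiagonal_eq_sum_range_succ_mk, Finset.sum_range_succ,
    Finset.sum_range_zero, coeff_mk, one_pow,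
    coeff_osp 1 _ _ one_pos, coeff_osp 2 _ _ two_pos, coeff_osp 3 _ _ (by norm_num),
    coeff_osp 4 _ _ (by norm_num), coeff_osp 5 _ _ (by norm_num)] at h5
  norm_num [Nat.choose] at h5
  -- abbreviations
  have hch : (((2 ^ e : ℕ).choose 2 : ℚ)) = (2:ℚ)^e * ((2:ℚ)^e - 1) / 2 := by
    rw [Nat.cast_choose_two]; push_cast; ring
  have h4e : ((4:ℚ))^e = (2:ℚ)^e * (2:ℚ)^e := by
    rw [show (4:ℚ) = 2 * 2 by norm_num, mul_pow]
  -- closed forms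
  have hp0 : p 0 = 1 := h0
  have hp1 : p 1 = 1 := by linarith
  rw [hp0, hp1] at h2 h3 h4 h5
  have hp2 : p 2 = 1 + (2:ℚ)^e := by linarith
  rw [hp2] at h3 h4 h5
  have hp3 : p 3 = 1 + (2:ℚ)^e + (3:ℚ)^e := by linarith
  rw [hp3] at h4 h5
  rw [hch, h4e] at h4 h5
  have hp4 : p 4 = 1 + 3/2 * (2:ℚ)^e + (3:ℚ)^e + 3/2 * ((2:ℚ)^e)^2 := by linarith
  rw [hp4] at h5
  have hp5 : p 5 = 1 + 3/2 * (2:ℚ)^e + (3:ℚ)^e + 3/2 * ((2:ℚ)^e)^2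
      + (2:ℚ)^e * (3:ℚ)^e + (5:ℚ)^e := by linarith
  have ha1 : (1:ℚ) ≤ (2:ℚ)^e := one_le_pow₀ (by norm_num)
  have ht1 : (1:ℚ) ≤ (3:ℚ)^e := one_le_pow₀ (by norm_num)
  have hg1 : (1:ℚ) ≤ (5:ℚ)^e := one_le_pow₀ (by norm_num)
  have h34 : (3:ℚ)^e ≤ (2:ℚ)^e * (2:ℚ)^e := by
    rw [← h4e]; exact pow_le_pow_left₀ (by norm_num) (by norm_num) e
  refine ⟨?_, ?_, ?_, ?_⟩
  · rw [hp0, hp1, hp2]; nlinarith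
  · rw [hp1, hp2, hp3]; nlinarith
  · rw [hp2, hp3, hp4]
    constructor
    · intro hineq
      by_contra hcon
      have he2 : e ≤ 2 := by omega
      interval_cases e <;> norm_num at hineq
    · intro hde
      have he3 : 3 ≤ e := by omega
      have := lem3 e he3
      have hq : 3 * (8:ℚ)^e + 4 * (4:ℚ)^e + (2:ℚ)^e <
          2 * (9:ℚ)^e + 2 * (6:ℚ)^e + 2 * (3:ℚ)^e := by exact_mod_cast this
      rw [show (8:ℚ) = 2*2*2 by norm_num, show (9:ℚ) = 3*3 by norm_num,
        show (6:ℚ) = 2*3 by norm_num, show (4:ℚ) = 2*2 by norm_num] at hq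
      simp only [mul_pow] at hq
      nlinarith [hq]
  · rw [hp3, hp4, hp5]
    constructor
    · intro hineq
      by_contra hcon
      have he4 : e ≤ 4 := by omega
      interval_cases e <;> norm_num at hineq
    · intro hde
      have he5 : 5 ≤ e := by omega
      have := lem4 e he5
      have hq : 2 * (12:ℚ)^e + 2 * (2:ℚ)^e + 9 * (4:ℚ)^e + 12 * (8:ℚ)^e + 9 * (16:ℚ)^e <
          2 * (6:ℚ)^e + 4 * (18:ℚ)^e + 4 * (5:ℚ)^e + 4 * (10:ℚ)^e + 4 * (15:ℚ)^e := by
        exact_mod_cast this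
      rw [show (12:ℚ) = 2*2*3 by norm_num, show (8:ℚ) = 2*2*2 by norm_num,
        show (16:ℚ) = 2*2*2*2 by norm_num, show (18:ℚ) = 2*3*3 by norm_num,
        show (6:ℚ) = 2*3 by norm_num, show (4:ℚ) = 2*2 by norm_num,
        show (10:ℚ) = 2*5 by norm_num, show (15:ℚ) = 3*5 by norm_num] at hq
      simp only [mul_pow] at hq
      nlinarith [hq]
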